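/- Let ℓ ≠ 0 and h be real, and suppose there exist −1 < x₋ < x₊ < 1 with P_{h,ℓ}(x₋) = P_{h,ℓ}(x₊) = 0, P_{h,ℓ} > 0 on (x₋, x₊), P_{h,ℓ} < 0 on (−1, x₋) ∪ (x₊, 1), and the derivative of P_{h,ℓ} is strictly positive at x₋ and strictly negative at x₊ (simple roots). Then the function h' ↦ F(h',ℓ) = ∫_{−1}^{1} √(max(2(h'−x)(1−x²) − ℓ², 0))/(1−x²) dx has derivative at h equal to ∫_{x₋}^{x₊} (P_{h,ℓ}(x))^{−1/2} dx. -/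

import Mathlib

open MeasureTheory intervalIntegral

lemma sqrt_max_sub_sqrt_le (a b : ℝ) (ha : 0 < a) :
    |Real.sqrt (max b 0) - Real.sqrt a| ≤ |b - a| / Real.sqrt a := by
  have hsa : 0 < Real.sqrt a := Real.sqrt_pos.2 ha
  have hma : Real.sqrt a * Real.sqrt a = a := Real.mul_self_sqrt ha.le
  rcases le_or_gt b 0 with hb | hb
  · rw [max_eq_right hb, Real.sqrt_zero, zero_sub, abs_neg, abs_of_pos hsa,
      abs_of_neg (by linarith : b - a < 0), le_div_iff₀ hsa]
    nlinarith
  · rw [max_eq_left hb.le, le_div_iff₀ hsa]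
    have hsb : (0:ℝ) ≤ Real.sqrt b := Real.sqrt_nonneg b
    have hmb : Real.sqrt b * Real.sqrt b = b := Real.mul_self_sqrt hb.le
    have key : (Real.sqrt b - Real.sqrt a) * (Real.sqrt b + Real.sqrt a) = b - a := by
      nlinarith
    calc |Real.sqrt b - Real.sqrt a| * Real.sqrt a
        ≤ |Real.sqrt b - Real.sqrt a| * (Real.sqrt b + Real.sqrt a) := by
          apply mul_le_mul_of_nonneg_left (by linarith) (abs_nonneg _)
      _ = |(Real.sqrt b - Real.sqrt a) * (Real.sqrt b + Real.sqrt a)| := by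
          rw [abs_mul, abs_of_nonneg (show (0:ℝ) ≤ Real.sqrt b + Real.sqrt a by linarith)]
      _ = |b - a| := by rw [key]

lemma neg_max_on_Icc (P : ℝ → ℝ) (hc : Continuous P) (a b : ℝ) (hab : a ≤ b)
    (hneg : ∀ x ∈ Set.Icc a b, P x < 0) :
    ∃ c > 0, ∀ x ∈ Set.Icc a b, P x ≤ -c := by
  obtain ⟨z, hz, hmax⟩ := (isCompact_Icc (a := a) (b := b)).exists_isMaxOn
    (Set.nonempty_Icc.2 hab) (hc.continuousOn)
  exact ⟨-P z, by linarith [hneg z hz], fun x hx => by linarith [isMaxOn_iff.1 hmax x hx]⟩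

set_option maxHeartbeats 8000000 in
theorem action_hasDerivAt_h (h ℓ xm xp : ℝ) (hℓ : ℓ ≠ 0)
    (h₁ : -1 < xm) (h₂ : xm < xp) (h₃ : xp < 1)
    (hzm : 2 * (h - xm) * (1 - xm ^ 2) - ℓ ^ 2 = 0)
    (hzp : 2 * (h - xp) * (1 - xp ^ 2) - ℓ ^ 2 = 0)
    (hpos : ∀ x ∈ Set.Ioo xm xp, 0 < 2 * (h - x) * (1 - x ^ 2) - ℓ ^ 2)
    (hneg : ∀ x, x ∈ Set.Ioo (-1 : ℝ) xm ∪ Set.Ioo xp 1 →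
      2 * (h - x) * (1 - x ^ 2) - ℓ ^ 2 < 0)
    (hdm : 0 < deriv (fun x => 2 * (h - x) * (1 - x ^ 2) - ℓ ^ 2) xm)
    (hdp : deriv (fun x => 2 * (h - x) * (1 - x ^ 2) - ℓ ^ 2) xp < 0) :
    HasDerivAt
      (fun h' : ℝ =>
        ∫ x in (-1 : ℝ)..1, Real.sqrt (max (2 * (h' - x) * (1 - x ^ 2) - ℓ ^ 2) 0) / (1 - x ^ 2))
      (∫ x in xm..xp, (Real.sqrt (2 * (h - x) * (1 - x ^ 2) - ℓ ^ 2))⁻¹) h := by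
  have hℓsq : 0 < ℓ ^ 2 := lt_of_le_of_ne (sq_nonneg ℓ) (Ne.symm (pow_ne_zero 2 hℓ))
  -- the polynomial P
  obtain ⟨P, hPdef⟩ : ∃ P : ℝ → ℝ, P = fun x => 2 * (h - x) * (1 - x ^ 2) - ℓ ^ 2 := ⟨_, rfl⟩
  rw [show (fun x => 2 * (h - x) * (1 - x ^ 2) - ℓ ^ 2) = P from hPdef.symm] at hdm hdp
  have hPapp : ∀ x, P x = 2 * (h - x) * (1 - x ^ 2) - ℓ ^ 2 := fun x => by rw [hPdef]
  have hpos' : ∀ x ∈ Set.Ioo xm xp, 0 < P x := by intro x hx; rw [hPapp]; exact hpos x hx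
  have hneg' : ∀ x, x ∈ Set.Ioo (-1 : ℝ) xm ∪ Set.Ioo xp 1 → P x < 0 := by
    intro x hx; rw [hPapp]; exact hneg x hx
  have hPcont : Continuous P := by rw [hPdef]; fun_prop
  have hPderiv : ∀ y : ℝ, HasDerivAt P (6 * y ^ 2 - 4 * h * y - 2) y := by
    intro y
    rw [hPdef]
    have A : HasDerivAt (fun x : ℝ => 2 * (h - x) * (1 - x ^ 2) - ℓ ^ 2)
        ((2 * (-1)) * (1 - y ^ 2) + (2 * (h - y)) * (-(2 * y ^ 1))) y :=
      ((((hasDerivAt_id y).const_sub h).const_mul 2).mul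
        ((hasDerivAt_pow 2 y).const_sub 1)).sub_const (ℓ ^ 2)
    convert A using 1
    ring
  obtain ⟨m, hmdef⟩ : ∃ m : ℝ, m = 6 * xm ^ 2 - 4 * h * xm - 2 := ⟨_, rfl⟩
  obtain ⟨Mp, hMdef⟩ : ∃ Mp : ℝ, Mp = -(6 * xp ^ 2 - 4 * h * xp - 2) := ⟨_, rfl⟩
  have hm : 0 < m := by rw [(hPderiv xm).deriv] at hdm; rw [hmdef]; exact hdm
  have hMp : 0 < Mp := by rw [(hPderiv xp).deriv] at hdp; rw [hMdef]; linarith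
  -- factorizations at the two roots
  obtain ⟨Rm, hRdef⟩ : ∃ R : ℝ → ℝ, R = fun x => 2 * (x ^ 2 + xm * x + xm ^ 2) - 2 * h * (x + xm) - 2 := ⟨_, rfl⟩
  obtain ⟨Sp, hSdef⟩ : ∃ S : ℝ → ℝ, S = fun x => 2 * (x ^ 2 + xp * x + xp ^ 2) - 2 * h * (x + xp) - 2 := ⟨_, rfl⟩
  have hfacm : ∀ x, P x = (x - xm) * Rm x := by
    intro x; rw [hPapp, hRdef]; linear_combination hzm
  have hfacp : ∀ x, P x = (x - xp) * Sp x := by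
    intro x; rw [hPapp, hSdef]; linear_combination hzp
  have hRxm : Rm xm = m := by rw [hRdef, hmdef]; ring
  have hSxp : Sp xp = -Mp := by rw [hSdef, hMdef]; ring
  -- choice of δ₀
  obtain ⟨εm, hεm, hεm'⟩ : ∃ ε > 0, ∀ ⦃y : ℝ⦄, dist y xm < ε → m / 2 < Rm y := by
    rw [← Metric.eventually_nhds_iff]
    exact (by rw [hRdef]; fun_prop : ContinuousAt Rm xm).eventually_const_lt (by rw [hRxm]; linarith)
  obtain ⟨εp, hεp, hεp'⟩ : ∃ ε > 0, ∀ ⦃y : ℝ⦄, dist y xp < ε → Sp y < -(Mp / 2) := by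
    rw [← Metric.eventually_nhds_iff]
    exact (by rw [hSdef]; fun_prop : ContinuousAt Sp xp).eventually_lt_const (by rw [hSxp]; linarith)
  obtain ⟨δ₀, hδdef⟩ : ∃ d : ℝ, d = min (min (εm / 2) (εp / 2))
      (min (min ((xm + 1) / 2) ((1 - xp) / 2)) ((xp - xm) / 2)) := ⟨_, rfl⟩
  have hδ₀ : 0 < δ₀ := by
    rw [hδdef]; simp only [lt_min_iff]
    refine ⟨⟨by linarith, by linarith⟩, ⟨by linarith, by linarith⟩, by linarith⟩
  have hδεm : δ₀ < εm := by
    rw [hδdef]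
    calc _ ≤ εm / 2 := le_trans (min_le_left _ _) (min_le_left _ _)
      _ < εm := by linarith
  have hδεp : δ₀ < εp := by
    rw [hδdef]
    calc _ ≤ εp / 2 := le_trans (min_le_left _ _) (min_le_right _ _)
      _ < εp := by linarith
  have hlo : -1 < xm - δ₀ := by
    have : δ₀ ≤ (xm + 1) / 2 := hδdef ▸ le_trans (min_le_right _ _)
      (le_trans (min_le_left _ _) (min_le_left _ _))
    linarith
  have hhi : xp + δ₀ < 1 := by
    have : δ₀ ≤ (1 - xp) / 2 := hδdef ▸ le_trans (min_le_right _ _)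
      (le_trans (min_le_left _ _) (min_le_right _ _))
    linarith
  have hmid : xm + δ₀ ≤ xp - δ₀ := by
    have : δ₀ ≤ (xp - xm) / 2 := hδdef ▸ le_trans (min_le_right _ _) (min_le_right _ _)
    linarith
  have hRge : ∀ x ∈ Set.Icc (xm - δ₀) (xm + δ₀), m / 2 < Rm x := by
    intro x hx
    exact hεm' (by rw [Real.dist_eq]; rw [abs_lt]; constructor <;>
      [linarith [hx.1, hδεm]; linarith [hx.2, hδεm]])
  have hSle : ∀ x ∈ Set.Icc (xp - δ₀) (xp + δ₀), Sp x < -(Mp / 2) := by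
    intro x hx
    exact hεp' (by rw [Real.dist_eq]; rw [abs_lt]; constructor <;>
      [linarith [hx.1, hδεp]; linarith [hx.2, hδεp]])
  -- linear bounds near the roots
  have hPleft_lin : ∀ x ∈ Set.Icc (xm - δ₀) xm, P x ≤ -(m / 2 * (xm - x)) := by
    intro x hx
    rw [hfacm x]
    have h1 : x - xm ≤ 0 := by linarith [hx.2]
    have h2 : m / 2 ≤ Rm x := (hRge x ⟨hx.1, by linarith [hx.2]⟩).le
    nlinarith [mul_nonneg (by linarith : (0:ℝ) ≤ xm - x) (by linarith : (0:ℝ) ≤ Rm x - m / 2)]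
  have hPleft_le : ∀ x ∈ Set.Icc (xm - δ₀) xm, P x ≤ 0 := by
    intro x hx
    have := hPleft_lin x hx
    linarith [mul_nonneg (by linarith : (0:ℝ) ≤ m / 2) (by linarith [hx.2] : (0:ℝ) ≤ xm - x)]
  have hPright_lin : ∀ x ∈ Set.Icc xp (xp + δ₀), P x ≤ -(Mp / 2 * (x - xp)) := by
    intro x hx
    rw [hfacp x]
    have h1 : 0 ≤ x - xp := by linarith [hx.1]
    have h2 : Sp x ≤ -(Mp / 2) := (hSle x ⟨by linarith [hx.1], hx.2⟩).le
    nlinarith [mul_nonneg h1 (by linarith : (0:ℝ) ≤ -(Mp / 2) - Sp x)]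
  have hPright_le : ∀ x ∈ Set.Icc xp (xp + δ₀), P x ≤ 0 := by
    intro x hx
    have := hPright_lin x hx
    linarith [mul_nonneg (by linarith : (0:ℝ) ≤ Mp / 2) (by linarith [hx.1] : (0:ℝ) ≤ x - xp)]
  have hPnear_m : ∀ x ∈ Set.Icc xm (xm + δ₀), (m / 2) * (x - xm) ≤ P x := by
    intro x hx
    rw [hfacm x]
    have h1 : 0 ≤ x - xm := by linarith [hx.1]
    have h2 : m / 2 ≤ Rm x := (hRge x ⟨by linarith [hx.1], hx.2⟩).le
    nlinarith [mul_nonneg h1 (by linarith : (0:ℝ) ≤ Rm x - m / 2)]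
  have hPnear_p : ∀ x ∈ Set.Icc (xp - δ₀) xp, (Mp / 2) * (xp - x) ≤ P x := by
    intro x hx
    rw [hfacp x]
    have h1 : x - xp ≤ 0 := by linarith [hx.2]
    have h2 : Sp x ≤ -(Mp / 2) := (hSle x ⟨hx.1, by linarith [hx.2]⟩).le
    nlinarith [mul_nonneg (by linarith : (0:ℝ) ≤ xp - x) (by linarith : (0:ℝ) ≤ -(Mp / 2) - Sp x)]
  -- κ : lower bound for 1 - x² on the middle region
  obtain ⟨κ, hκdef⟩ : ∃ k : ℝ, k = min (1 - (xm - δ₀) ^ 2) (1 - (xp + δ₀) ^ 2) := ⟨_, rfl⟩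
  have hκ : 0 < κ := by
    rw [hκdef, lt_min_iff]
    constructor
    · nlinarith [mul_pos (show (0:ℝ) < 1 - (xm - δ₀) by linarith) (show (0:ℝ) < 1 + (xm - δ₀) by linarith)]
    · nlinarith [mul_pos (show (0:ℝ) < 1 - (xp + δ₀) by linarith) (show (0:ℝ) < 1 + (xp + δ₀) by linarith)]
  have hκle : ∀ x ∈ Set.Icc (xm - δ₀) (xp + δ₀), κ ≤ 1 - x ^ 2 := by
    intro x hx
    rcases le_or_gt x 0 with hx0 | hx0
    · have : κ ≤ 1 - (xm - δ₀) ^ 2 := hκdef ▸ min_le_left _ _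
      nlinarith [hx.1]
    · have : κ ≤ 1 - (xp + δ₀) ^ 2 := hκdef ▸ min_le_right _ _
      nlinarith [hx.2]
  -- far-region negative bound c₁
  obtain ⟨c₁, hc₁, hfar⟩ : ∃ c > 0, (∀ x ∈ Set.Icc (-1 : ℝ) (xm - δ₀), P x ≤ -c) ∧
      (∀ x ∈ Set.Icc (xp + δ₀) (1 : ℝ), P x ≤ -c) := by
    obtain ⟨ca, hca, hA⟩ := neg_max_on_Icc P hPcont (-1) (xm - δ₀) (by linarith)
      (by
        intro x hx
        rcases eq_or_lt_of_le hx.1 with he | hlt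
        · rw [hPapp, ← he]; nlinarith
        · exact hneg' x (Or.inl ⟨hlt, by linarith [hx.2, hδ₀]⟩))
    obtain ⟨cb, hcb, hB⟩ := neg_max_on_Icc P hPcont (xp + δ₀) 1 (by linarith)
      (by
        intro x hx
        rcases eq_or_lt_of_le hx.2 with he | hlt
        · rw [hPapp, he]; nlinarith
        · exact hneg' x (Or.inr ⟨by linarith [hx.1, hδ₀], hlt⟩))
    exact ⟨min ca cb, lt_min hca hcb,
      fun x hx => by have := min_le_left ca cb; linarith [hA x hx],
      fun x hx => by have := min_le_right ca cb; linarith [hB x hx]⟩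
  -- the integrand Φ and difference quotient q
  obtain ⟨Φ, hΦdef⟩ : ∃ Φ : ℝ → ℝ → ℝ,
      Φ = fun k x => Real.sqrt (max (2 * (k - x) * (1 - x ^ 2) - ℓ ^ 2) 0) / (1 - x ^ 2) :=
    ⟨_, rfl⟩
  have hΦapp : ∀ k x, Φ k x =
      Real.sqrt (max (2 * (k - x) * (1 - x ^ 2) - ℓ ^ 2) 0) / (1 - x ^ 2) :=
    fun k x => by rw [hΦdef]
  have hshift : ∀ k x, 2 * (k - x) * (1 - x ^ 2) - ℓ ^ 2 = P x + 2 * (k - h) * (1 - x ^ 2) := by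
    intro k x; rw [hPapp]; ring
  -- Φ vanishes in the far region
  have hΦfar : ∀ k, |k - h| ≤ c₁ / 2 → ∀ x,
      (x ∈ Set.Icc (-1 : ℝ) (xm - δ₀) ∨ x ∈ Set.Icc (xp + δ₀) (1 : ℝ)) → Φ k x = 0 := by
    intro k hk x hx
    have hxI : -1 ≤ x ∧ x ≤ 1 := by
      rcases hx with hx | hx
      · exact ⟨hx.1, by linarith [hx.2, hδ₀, h₁, h₂, h₃]⟩
      · exact ⟨by linarith [hx.1, hδ₀, h₁, h₂, h₃], hx.2⟩
    have h1x : 0 ≤ 1 - x ^ 2 := by nlinarith [hxI.1, hxI.2]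
    have h1x' : 1 - x ^ 2 ≤ 1 := by nlinarith [hxI.1, hxI.2]
    have hP : P x ≤ -c₁ := by rcases hx with hx | hx; exacts [hfar.1 x hx, hfar.2 x hx]
    have hk' := abs_le.1 hk
    have harg : 2 * (k - x) * (1 - x ^ 2) - ℓ ^ 2 ≤ 0 := by
      rw [hshift]
      have h2 : 2 * (k - h) * (1 - x ^ 2) ≤ c₁ := by
        nlinarith [mul_nonneg (by linarith : (0:ℝ) ≤ c₁ / 2 - (k - h)) h1x,
          mul_nonneg (le_of_lt hc₁) (by linarith : (0:ℝ) ≤ 1 - (1 - x ^ 2))]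
      linarith
    rw [hΦapp, max_eq_right harg, Real.sqrt_zero, zero_div]
  -- Φ h vanishes on the outer strips
  have hΦO1 : ∀ x ∈ Set.Icc (xm - δ₀) xm, Φ h x = 0 := by
    intro x hx
    rw [hΦapp, ← hPapp x, max_eq_right (hPleft_le x hx), Real.sqrt_zero, zero_div]
  have hΦO2 : ∀ x ∈ Set.Icc xp (xp + δ₀), Φ h x = 0 := by
    intro x hx
    rw [hΦapp, ← hPapp x, max_eq_right (hPright_le x hx), Real.sqrt_zero, zero_div]
  -- global bound for Φ on [-1,1]
  have hΦbd : ∀ k, |k - h| ≤ c₁ / 2 → ∀ x ∈ Set.Icc (-1 : ℝ) 1,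
      |Φ k x| ≤ Real.sqrt (2 * (|h| + 1) + ℓ ^ 2 + c₁) / κ := by
    intro k hk x hx
    have hCnn : 0 ≤ Real.sqrt (2 * (|h| + 1) + ℓ ^ 2 + c₁) / κ :=
      div_nonneg (Real.sqrt_nonneg _) hκ.le
    rcases le_or_gt x (xm - δ₀) with hx1 | hx1
    · rw [hΦfar k hk x (Or.inl ⟨hx.1, hx1⟩), abs_zero]; exact hCnn
    rcases le_or_gt (xp + δ₀) x with hx2 | hx2
    · rw [hΦfar k hk x (Or.inr ⟨hx2, hx.2⟩), abs_zero]; exact hCnn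
    have hκx : κ ≤ 1 - x ^ 2 := hκle x ⟨hx1.le, hx2.le⟩
    have h1x : 0 < 1 - x ^ 2 := lt_of_lt_of_le hκ hκx
    have h1x' : 1 - x ^ 2 ≤ 1 := by nlinarith [hx.1, hx.2]
    have hk' := abs_le.1 hk
    have hh' := abs_le.1 (le_refl |h|)
    have harg : 2 * (k - x) * (1 - x ^ 2) - ℓ ^ 2 ≤ 2 * (|h| + 1) + ℓ ^ 2 + c₁ := by
      rw [hshift, hPapp]
      have e1 : h - x ≤ |h| + 1 := by linarith [le_abs_self h, hx.1]
      have e2 : -(|h| + 1) ≤ h - x := by linarith [neg_abs_le h, hx.2]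
      have p1 : 2 * (h - x) * (1 - x ^ 2) ≤ 2 * (|h| + 1) := by
        nlinarith [mul_nonneg (by linarith : (0:ℝ) ≤ |h| + 1 - (h - x)) h1x.le,
          mul_nonneg (by positivity : (0:ℝ) ≤ |h| + 1) (by linarith : (0:ℝ) ≤ 1 - (1 - x ^ 2))]
      have p2 : 2 * (k - h) * (1 - x ^ 2) ≤ c₁ := by
        nlinarith [mul_nonneg (by linarith : (0:ℝ) ≤ c₁ / 2 - (k - h)) h1x.le,
          mul_nonneg (le_of_lt hc₁) (by linarith : (0:ℝ) ≤ 1 - (1 - x ^ 2))]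
      nlinarith [sq_nonneg ℓ]
    rw [hΦapp, abs_of_nonneg (div_nonneg (Real.sqrt_nonneg _) h1x.le)]
    apply div_le_div₀ (Real.sqrt_nonneg _) _ hκ hκx
    apply Real.sqrt_le_sqrt
    exact max_le harg (by positivity)
  -- measurability
  have hΦmeas : ∀ k, Measurable (Φ k) := by
    intro k; rw [hΦdef]
    exact (Real.continuous_sqrt.measurable.comp
      (((by fun_prop : Continuous fun x : ℝ => 2 * (k - x) * (1 - x ^ 2) - ℓ ^ 2).max
        continuous_const).measurable)).div (by fun_prop)
  -- interval integrability of Φ on subintervals of [-1,1]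
  have hΦint : ∀ k, |k - h| ≤ c₁ / 2 → ∀ a b : ℝ, a ∈ Set.Icc (-1 : ℝ) 1 →
      b ∈ Set.Icc (-1 : ℝ) 1 → IntervalIntegrable (Φ k) volume a b := by
    intro k hk a b ha hb
    apply IntervalIntegrable.mono_fun'
      (g := fun _ => Real.sqrt (2 * (|h| + 1) + ℓ ^ 2 + c₁) / κ) intervalIntegrable_const
      (hΦmeas k).aestronglyMeasurable
    have hsub : Set.uIoc a b ⊆ Set.Icc (-1 : ℝ) 1 :=
      le_trans Set.Ioc_subset_Icc_self (Set.uIcc_subset_Icc ha hb)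
    exact Filter.Eventually.mono (ae_restrict_mem measurableSet_uIoc)
      (fun x hx => hΦbd k hk x (hsub hx))
  have hhk0 : |h - h| ≤ c₁ / 2 := by simp; positivity
  -- q : the difference quotient integrand
  obtain ⟨q, hqdef⟩ : ∃ q : ℝ → ℝ → ℝ, q = fun k x => (k - h)⁻¹ * (Φ k x - Φ h x) := ⟨_, rfl⟩
  have hqapp : ∀ k x, q k x = (k - h)⁻¹ * (Φ k x - Φ h x) := fun k x => by rw [hqdef]
  have hqmeas : ∀ k, Measurable (q k) := by
    intro k; rw [hqdef]
    exact ((hΦmeas k).sub (hΦmeas h)).const_mul _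
  have hqint : ∀ k, |k - h| ≤ c₁ / 2 → ∀ a b : ℝ, a ∈ Set.Icc (-1 : ℝ) 1 →
      b ∈ Set.Icc (-1 : ℝ) 1 → IntervalIntegrable (q k) volume a b := by
    intro k hk a b ha hb
    rw [hqdef]
    exact ((hΦint k hk a b ha hb).sub (hΦint h hhk0 a b ha hb)).const_mul _
  -- integrability of the dominating function  2 / sqrt (P x)  on [xm, xp]
  have hdom : IntervalIntegrable (fun x => 2 * (Real.sqrt (P x))⁻¹) volume xm xp := by
    have hmeas2 : Measurable fun x => 2 * (Real.sqrt (P x))⁻¹ := by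
      apply Measurable.const_mul
      exact (Real.continuous_sqrt.measurable.comp hPcont.measurable).inv
    have p1 : IntervalIntegrable (fun x => 2 * (Real.sqrt (P x))⁻¹) volume xm (xm + δ₀) := by
      have hg : IntervalIntegrable
          (fun x => 2 * (Real.sqrt (m / 2))⁻¹ * ((x - xm) ^ (-(1/2) : ℝ))) volume xm (xm + δ₀) := by
        have := (intervalIntegral.intervalIntegrable_rpow'
          (a := 0) (b := δ₀) (r := -(1/2)) (by norm_num)).comp_sub_right xm
        simpa [add_comm] using this.const_mul (2 * (Real.sqrt (m / 2))⁻¹)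
      apply IntervalIntegrable.mono_fun' hg hmeas2.aestronglyMeasurable
      apply Filter.Eventually.mono (ae_restrict_mem measurableSet_uIoc)
      intro x hx
      rw [Set.uIoc_of_le (by linarith : xm ≤ xm + δ₀)] at hx
      have hxm : 0 < x - xm := by linarith [hx.1]
      have hPx : m / 2 * (x - xm) ≤ P x := hPnear_m x ⟨hx.1.le, hx.2⟩
      have hPxpos : 0 < P x := lt_of_lt_of_le (by positivity) hPx
      have hrw : (x - xm) ^ (-(1/2) : ℝ) = (Real.sqrt (x - xm))⁻¹ := by
        rw [Real.rpow_neg hxm.le, Real.sqrt_eq_rpow]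
      simp only [Real.norm_eq_abs]
      rw [hrw, abs_of_nonneg (by positivity)]
      rw [mul_assoc, ← mul_inv, ← Real.sqrt_mul (by positivity : (0:ℝ) ≤ m / 2)]
      apply mul_le_mul_of_nonneg_left _ (by norm_num)
      apply inv_anti₀ (Real.sqrt_pos.2 (by positivity))
      exact Real.sqrt_le_sqrt hPx
    have p3 : IntervalIntegrable (fun x => 2 * (Real.sqrt (P x))⁻¹) volume (xp - δ₀) xp := by
      have hg : IntervalIntegrable
          (fun x => 2 * (Real.sqrt (Mp / 2))⁻¹ * ((xp - x) ^ (-(1/2) : ℝ))) volume (xp - δ₀) xp := by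
        have := ((intervalIntegral.intervalIntegrable_rpow'
          (a := 0) (b := δ₀) (r := -(1/2)) (by norm_num)).comp_sub_left xp).symm
        simpa using this.const_mul (2 * (Real.sqrt (Mp / 2))⁻¹)
      apply IntervalIntegrable.mono_fun' hg hmeas2.aestronglyMeasurable
      have hae_ne : ∀ᵐ x ∂(volume.restrict (Set.uIoc (xp - δ₀) xp)), x ≠ xp :=
        Filter.Eventually.filter_mono (ae_mono Measure.restrict_le_self)
          (by simpa [MeasureTheory.ae_iff] using Real.volume_singleton (x := xp))
      filter_upwards [ae_restrict_mem measurableSet_uIoc, hae_ne] with x hx hne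
      rw [Set.uIoc_of_le (by linarith : xp - δ₀ ≤ xp)] at hx
      have hxm : 0 < xp - x := lt_of_le_of_ne (by linarith [hx.2]) (by intro hc; exact hne (by linarith))
      have hPx : Mp / 2 * (xp - x) ≤ P x := hPnear_p x ⟨hx.1.le, hx.2⟩
      have hPxpos : 0 < P x := lt_of_lt_of_le (by positivity) hPx
      have hrw : (xp - x) ^ (-(1/2) : ℝ) = (Real.sqrt (xp - x))⁻¹ := by
        rw [Real.rpow_neg hxm.le, Real.sqrt_eq_rpow]
      simp only [Real.norm_eq_abs]
      rw [hrw, abs_of_nonneg (by positivity)]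
      rw [mul_assoc, ← mul_inv, ← Real.sqrt_mul (by positivity : (0:ℝ) ≤ Mp / 2)]
      apply mul_le_mul_of_nonneg_left _ (by norm_num)
      apply inv_anti₀ (Real.sqrt_pos.2 (by positivity))
      exact Real.sqrt_le_sqrt hPx
    have p2 : IntervalIntegrable (fun x => 2 * (Real.sqrt (P x))⁻¹) volume (xm + δ₀) (xp - δ₀) := by
      apply ContinuousOn.intervalIntegrable
      apply ContinuousOn.mul continuousOn_const
      apply ContinuousOn.inv₀ (Real.continuous_sqrt.comp_continuousOn hPcont.continuousOn)
      intro x hx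
      rw [Set.uIcc_of_le hmid] at hx
      have : 0 < P x := hpos' x ⟨by linarith [hx.1, hδ₀], by linarith [hx.2, hδ₀]⟩
      exact (Real.sqrt_pos.2 this).ne'
    exact (p1.trans p2).trans p3
  -- membership of the split points in [-1,1]
  have em1 : (-1:ℝ) ∈ Set.Icc (-1:ℝ) 1 := Set.mem_Icc.2 ⟨le_refl _, by norm_num⟩
  have e1 : (1:ℝ) ∈ Set.Icc (-1:ℝ) 1 := Set.mem_Icc.2 ⟨by norm_num, le_refl _⟩
  have elo : xm - δ₀ ∈ Set.Icc (-1:ℝ) 1 := Set.mem_Icc.2 ⟨hlo.le, by linarith⟩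
  have exm : xm ∈ Set.Icc (-1:ℝ) 1 := Set.mem_Icc.2 ⟨h₁.le, by linarith⟩
  have exp' : xp ∈ Set.Icc (-1:ℝ) 1 := Set.mem_Icc.2 ⟨by linarith, h₃.le⟩
  have ehi : xp + δ₀ ∈ Set.Icc (-1:ℝ) 1 := Set.mem_Icc.2 ⟨by linarith, hhi.le⟩
  -- the relevant filter events
  have hmem : ∀ᶠ k in nhdsWithin h {h}ᶜ, k ≠ h ∧ |k - h| ≤ c₁ / 2 := by
    have h1 : ∀ᶠ k in nhds h, |k - h| ≤ c₁ / 2 :=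
      Metric.eventually_nhds_iff.2 ⟨c₁ / 2, by positivity,
        fun y hy => le_of_lt (by simpa [Real.dist_eq] using hy)⟩
    filter_upwards [self_mem_nhdsWithin, nhdsWithin_le_nhds h1] with k hk hk'
    exact ⟨by simpa using hk, hk'⟩
  rw [hasDerivAt_iff_tendsto_slope]
  -- the eventual decomposition of the slope into five pieces
  have hsplit : ∀ᶠ k in nhdsWithin h {h}ᶜ,
      slope (fun h' : ℝ => ∫ x in (-1 : ℝ)..1,
        Real.sqrt (max (2 * (h' - x) * (1 - x ^ 2) - ℓ ^ 2) 0) / (1 - x ^ 2)) h k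
      = (∫ x in (-1:ℝ)..(xm - δ₀), q k x) + (∫ x in (xm - δ₀)..xm, q k x)
        + (∫ x in xm..xp, q k x) + (∫ x in xp..(xp + δ₀), q k x)
        + (∫ x in (xp + δ₀)..(1:ℝ), q k x) := by
    filter_upwards [hmem] with k hk
    obtain ⟨hkne, hkd⟩ := hk
    rw [slope_def_field]
    simp only [← hΦapp]
    rw [← intervalIntegral.integral_sub (hΦint k hkd _ _ em1 e1) (hΦint h hhk0 _ _ em1 e1),
      div_eq_inv_mul, ← intervalIntegral.integral_const_mul]
    simp only [← hqapp]
    rw [← intervalIntegral.integral_add_adjacent_intervals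
        (hqint k hkd _ _ em1 ehi) (hqint k hkd _ _ ehi e1),
      ← intervalIntegral.integral_add_adjacent_intervals
        (hqint k hkd _ _ em1 exp') (hqint k hkd _ _ exp' ehi),
      ← intervalIntegral.integral_add_adjacent_intervals
        (hqint k hkd _ _ em1 exm) (hqint k hkd _ _ exm exp'),
      ← intervalIntegral.integral_add_adjacent_intervals
        (hqint k hkd _ _ em1 elo) (hqint k hkd _ _ elo exm)]
  -- far pieces tend to 0
  have T1 : Filter.Tendsto (fun k => ∫ x in (-1:ℝ)..(xm - δ₀), q k x)
      (nhdsWithin h {h}ᶜ) (nhds 0) := by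
    refine Filter.Tendsto.congr' ?_ tendsto_const_nhds
    filter_upwards [hmem] with k hk
    have hEq : Set.EqOn (q k) 0 (Set.uIcc (-1:ℝ) (xm - δ₀)) := by
      intro x hx
      rw [Set.uIcc_of_le (by linarith : (-1:ℝ) ≤ xm - δ₀)] at hx
      show q k x = 0
      rw [hqapp, hΦfar k hk.2 x (Or.inl hx), hΦfar h hhk0 x (Or.inl hx)]
      simp
    exact (((intervalIntegral.integral_congr hEq).trans (by simp))).symm
  have T5 : Filter.Tendsto (fun k => ∫ x in (xp + δ₀)..(1:ℝ), q k x)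
      (nhdsWithin h {h}ᶜ) (nhds 0) := by
    refine Filter.Tendsto.congr' ?_ tendsto_const_nhds
    filter_upwards [hmem] with k hk
    have hEq : Set.EqOn (q k) 0 (Set.uIcc (xp + δ₀) (1:ℝ)) := by
      intro x hx
      rw [Set.uIcc_of_le (by linarith : xp + δ₀ ≤ (1:ℝ))] at hx
      show q k x = 0
      rw [hqapp, hΦfar k hk.2 x (Or.inr hx), hΦfar h hhk0 x (Or.inr hx)]
      simp
    exact (((intervalIntegral.integral_congr hEq).trans (by simp))).symm
  -- middle piece: dominated convergence
  have hae_ne : ∀ᵐ (x : ℝ), x ≠ xp := by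
    simpa [MeasureTheory.ae_iff] using Real.volume_singleton (x := xp)
  have T3 : Filter.Tendsto (fun k => ∫ x in xm..xp, q k x) (nhdsWithin h {h}ᶜ)
      (nhds (∫ x in xm..xp, (Real.sqrt (2 * (h - x) * (1 - x ^ 2) - ℓ ^ 2))⁻¹)) := by
    apply intervalIntegral.tendsto_integral_filter_of_dominated_convergence
      (bound := fun x => 2 * (Real.sqrt (P x))⁻¹)
    · exact Filter.Eventually.of_forall fun k => (hqmeas k).aestronglyMeasurable
    · filter_upwards [self_mem_nhdsWithin] with k hkmem
      have hkne : k ≠ h := by simpa using hkmem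
      filter_upwards [hae_ne] with x hne hxI
      rw [Set.uIoc_of_le h₂.le] at hxI
      have hIoo : x ∈ Set.Ioo xm xp := ⟨hxI.1, lt_of_le_of_ne hxI.2 hne⟩
      have hPx : 0 < P x := hpos' x hIoo
      have h1x : 0 < 1 - x ^ 2 := by nlinarith [hIoo.1, hIoo.2, h₁, h₃]
      have hsp : 0 < Real.sqrt (P x) := Real.sqrt_pos.2 hPx
      have htp : 0 < |k - h| := abs_pos.2 (sub_ne_zero.2 hkne)
      have e1' : Φ h x = Real.sqrt (P x) / (1 - x ^ 2) := by
        rw [hΦapp, ← hPapp x, max_eq_left hPx.le]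
      have e2' : Φ k x = Real.sqrt (max (P x + 2 * (k - h) * (1 - x ^ 2)) 0) / (1 - x ^ 2) := by
        rw [hΦapp]
        congr 2
        rw [hshift]
      have key := sqrt_max_sub_sqrt_le (P x) (P x + 2 * (k - h) * (1 - x ^ 2)) hPx
      rw [show P x + 2 * (k - h) * (1 - x ^ 2) - P x = 2 * (k - h) * (1 - x ^ 2) by ring] at key
      have habs2 : |2 * (k - h) * (1 - x ^ 2)| = 2 * |k - h| * (1 - x ^ 2) := by
        rw [abs_mul, abs_mul, abs_two, abs_of_pos h1x]
      rw [habs2] at key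
      have hqb : ‖q k x‖ ≤ |k - h|⁻¹ * (2 * |k - h| * (1 - x ^ 2) / Real.sqrt (P x) / (1 - x ^ 2)) := by
        rw [hqapp, Real.norm_eq_abs, abs_mul, abs_inv]
        apply mul_le_mul_of_nonneg_left _ (by positivity)
        rw [e1', e2', div_sub_div_same, abs_div, abs_of_pos h1x]
        exact (div_le_div_iff_of_pos_right h1x).2 key
      calc ‖q k x‖ ≤ |k - h|⁻¹ * (2 * |k - h| * (1 - x ^ 2) / Real.sqrt (P x) / (1 - x ^ 2)) := hqb
        _ = 2 * (Real.sqrt (P x))⁻¹ := by field_simp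
    · exact hdom
    · filter_upwards [hae_ne] with x hne hxI
      rw [Set.uIoc_of_le h₂.le] at hxI
      have hIoo : x ∈ Set.Ioo xm xp := ⟨hxI.1, lt_of_le_of_ne hxI.2 hne⟩
      have hPx : 0 < P x := hpos' x hIoo
      have h1x : 0 < 1 - x ^ 2 := by nlinarith [hIoo.1, hIoo.2, h₁, h₃]
      have hlin : HasDerivAt (fun k : ℝ => 2 * (k - x) * (1 - x ^ 2) - ℓ ^ 2)
          (2 * (1 - x ^ 2)) h := by
        have A : HasDerivAt (fun k : ℝ => 2 * (k - x) * (1 - x ^ 2) - ℓ ^ 2)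
            (2 * 1 * (1 - x ^ 2)) h := ((((hasDerivAt_id h).sub_const x).const_mul 2).mul_const (1 - x ^ 2)).sub_const
          (ℓ ^ 2)
        convert A using 1
        ring
      have hne0 : 2 * (h - x) * (1 - x ^ 2) - ℓ ^ 2 ≠ 0 := by
        rw [← hPapp x]; exact hPx.ne'
      have hder := (hlin.sqrt hne0).div_const (1 - x ^ 2)
      have hval : 2 * (1 - x ^ 2) / (2 * Real.sqrt (2 * (h - x) * (1 - x ^ 2) - ℓ ^ 2))
          / (1 - x ^ 2) = (Real.sqrt (2 * (h - x) * (1 - x ^ 2) - ℓ ^ 2))⁻¹ := by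
        have hsp : 0 < Real.sqrt (2 * (h - x) * (1 - x ^ 2) - ℓ ^ 2) := by
          rw [← hPapp x]; exact Real.sqrt_pos.2 hPx
        field_simp
      rw [hval] at hder
      have hev : (fun k => Φ k x) =ᶠ[nhds h]
          (fun k => Real.sqrt (2 * (k - x) * (1 - x ^ 2) - ℓ ^ 2) / (1 - x ^ 2)) := by
        have hca : ContinuousAt (fun k : ℝ => 2 * (k - x) * (1 - x ^ 2) - ℓ ^ 2) h := by fun_prop
        filter_upwards [hca.eventually_const_lt
          (show (0:ℝ) < 2 * (h - x) * (1 - x ^ 2) - ℓ ^ 2 by rw [← hPapp x]; exact hPx)] with k hk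
        rw [hΦapp, max_eq_left hk.le]
      have hg : HasDerivAt (fun k => Φ k x)
          ((Real.sqrt (2 * (h - x) * (1 - x ^ 2) - ℓ ^ 2))⁻¹) h :=
        hder.congr_of_eventuallyEq hev
      rw [hasDerivAt_iff_tendsto_slope] at hg
      refine hg.congr fun k => ?_
      rw [slope_def_field, hqapp, div_eq_inv_mul]
  -- right outer strip
  have T4 : Filter.Tendsto (fun k => ∫ x in xp..(xp + δ₀), q k x) (nhdsWithin h {h}ᶜ)
      (nhds 0) := by
    refine squeeze_zero_norm' (a := fun k => 4 / (Mp * κ) * Real.sqrt (2 * |k - h|)) ?_ ?_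
    · filter_upwards [hmem] with k hk
      obtain ⟨hkne, hkd⟩ := hk
      have htp : 0 < |k - h| := abs_pos.2 (sub_ne_zero.2 hkne)
      have hbd : ∀ x ∈ Set.Icc xp (xp + δ₀), ‖Φ k x‖ ≤ Real.sqrt (2 * |k - h|) / κ := by
        intro x hx
        have hκx : κ ≤ 1 - x ^ 2 := hκle x ⟨by linarith [hx.1], hx.2⟩
        have h1x : 0 < 1 - x ^ 2 := lt_of_lt_of_le hκ hκx
        have hP0 : P x ≤ 0 := hPright_le x hx
        have h1x' : 1 - x ^ 2 ≤ 1 := by linarith [sq_nonneg x]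
        have harg : 2 * (k - x) * (1 - x ^ 2) - ℓ ^ 2 ≤ 2 * |k - h| := by
          rw [hshift]
          linarith [mul_nonneg (by linarith [le_abs_self (k - h)] :
              (0:ℝ) ≤ |k - h| - (k - h)) h1x.le,
            mul_nonneg (abs_nonneg (k - h)) (by linarith : (0:ℝ) ≤ 1 - (1 - x ^ 2))]
        rw [hΦapp, Real.norm_eq_abs, abs_of_nonneg (div_nonneg (Real.sqrt_nonneg _) h1x.le)]
        apply div_le_div₀ (Real.sqrt_nonneg _) _ hκ hκx
        exact Real.sqrt_le_sqrt (max_le harg (by positivity))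
      have hvan : ∀ x ∈ Set.Icc xp (xp + δ₀), 4 * |k - h| / Mp ≤ x - xp → Φ k x = 0 := by
        intro x hx hxw
        have hPlin := hPright_lin x hx
        have h1x' : 1 - x ^ 2 ≤ 1 := by linarith [sq_nonneg x]
        have h1xnn : 0 ≤ 1 - x ^ 2 := by nlinarith [mul_nonneg (by linarith [hx.2] : (0:ℝ) ≤ 1 - x) (by linarith [hx.1] : (0:ℝ) ≤ 1 + x)]
        have harg : 2 * (k - x) * (1 - x ^ 2) - ℓ ^ 2 ≤ 0 := by
          rw [hshift]
          have h2 : 2 * (k - h) * (1 - x ^ 2) ≤ 2 * |k - h| := by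
            linarith [mul_nonneg (by linarith [le_abs_self (k - h)] :
                (0:ℝ) ≤ |k - h| - (k - h)) h1xnn,
              mul_nonneg (abs_nonneg (k - h)) (by linarith : (0:ℝ) ≤ 1 - (1 - x ^ 2))]
          have h4 := mul_le_mul_of_nonneg_left hxw (by positivity : (0:ℝ) ≤ Mp / 2)
          have hcancel : Mp / 2 * (4 * |k - h| / Mp) = 2 * |k - h| := by
            field_simp
            ring
          linarith [h4, hcancel]
        rw [hΦapp, max_eq_right harg, Real.sqrt_zero, zero_div]
      have hΦh0 : (∫ x in xp..(xp + δ₀), Φ h x) = 0 := by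
        have hEq : Set.EqOn (Φ h) 0 (Set.uIcc xp (xp + δ₀)) := by
          intro x hx
          rw [Set.uIcc_of_le (by linarith : xp ≤ xp + δ₀)] at hx
          exact hΦO2 x hx
        exact (intervalIntegral.integral_congr hEq).trans (by simp)
      have heq : (∫ x in xp..(xp + δ₀), q k x)
          = (k - h)⁻¹ * ∫ x in xp..(xp + δ₀), Φ k x := by
        simp only [hqapp]
        rw [intervalIntegral.integral_const_mul,
          intervalIntegral.integral_sub (hΦint k hkd _ _ exp' ehi) (hΦint h hhk0 _ _ exp' ehi),
          hΦh0, sub_zero]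
      have hw : (0:ℝ) ≤ 4 * |k - h| / Mp := by positivity
      have hIest : ‖∫ x in xp..(xp + δ₀), Φ k x‖
          ≤ Real.sqrt (2 * |k - h|) / κ * (4 * |k - h| / Mp) := by
        rcases le_total (xp + δ₀) (xp + 4 * |k - h| / Mp) with hca | hca
        · have hb := intervalIntegral.norm_integral_le_of_norm_le_const
            (C := Real.sqrt (2 * |k - h|) / κ) (f := Φ k) (a := xp) (b := xp + δ₀)
            (fun x hx => by
              rw [Set.uIoc_of_le (by linarith : xp ≤ xp + δ₀)] at hx
              exact hbd x ⟨hx.1.le, hx.2⟩)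
          refine le_trans hb ?_
          rw [show xp + δ₀ - xp = δ₀ by ring, abs_of_pos hδ₀]
          exact mul_le_mul_of_nonneg_left (by linarith) (by positivity)
        · have hmemw : xp + 4 * |k - h| / Mp ∈ Set.Icc (-1:ℝ) 1 :=
            ⟨by linarith [hw, exp'.1], by linarith [hca, hhi]⟩
          rw [← intervalIntegral.integral_add_adjacent_intervals
            (hΦint k hkd _ _ exp' hmemw) (hΦint k hkd _ _ hmemw ehi)]
          have hzero : (∫ x in (xp + 4 * |k - h| / Mp)..(xp + δ₀), Φ k x) = 0 := by
            have hEq : Set.EqOn (Φ k) 0 (Set.uIcc (xp + 4 * |k - h| / Mp) (xp + δ₀)) := by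
              intro x hx
              rw [Set.uIcc_of_le (by linarith : xp + 4 * |k - h| / Mp ≤ xp + δ₀)] at hx
              exact hvan x ⟨by linarith [hx.1, hw], hx.2⟩ (by linarith [hx.1])
            exact (intervalIntegral.integral_congr hEq).trans (by simp)
          rw [hzero, add_zero]
          have hb := intervalIntegral.norm_integral_le_of_norm_le_const
            (C := Real.sqrt (2 * |k - h|) / κ) (f := Φ k) (a := xp)
            (b := xp + 4 * |k - h| / Mp)
            (fun x hx => by
              rw [Set.uIoc_of_le (by linarith [hw] : xp ≤ xp + 4 * |k - h| / Mp)] at hx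
              exact hbd x ⟨hx.1.le, by linarith [hx.2, hca]⟩)
          refine le_trans hb (le_of_eq ?_)
          rw [show xp + 4 * |k - h| / Mp - xp = 4 * |k - h| / Mp by ring, abs_of_nonneg hw]
      rw [heq, norm_mul, norm_inv, Real.norm_eq_abs]
      calc |k - h|⁻¹ * ‖∫ x in xp..(xp + δ₀), Φ k x‖
          ≤ |k - h|⁻¹ * (Real.sqrt (2 * |k - h|) / κ * (4 * |k - h| / Mp)) :=
            mul_le_mul_of_nonneg_left hIest (by positivity)
        _ = 4 / (Mp * κ) * Real.sqrt (2 * |k - h|) := by field_simp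
    · have hcont : Continuous fun k : ℝ => 4 / (Mp * κ) * Real.sqrt (2 * |k - h|) := by
        fun_prop
      refine Filter.Tendsto.mono_left ?_ (nhdsWithin_le_nhds (s := {h}ᶜ))
      simpa using hcont.tendsto h
  -- left outer strip
  have T2 : Filter.Tendsto (fun k => ∫ x in (xm - δ₀)..xm, q k x) (nhdsWithin h {h}ᶜ)
      (nhds 0) := by
    refine squeeze_zero_norm' (a := fun k => 4 / (m * κ) * Real.sqrt (2 * |k - h|)) ?_ ?_
    · filter_upwards [hmem] with k hk
      obtain ⟨hkne, hkd⟩ := hk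
      have htp : 0 < |k - h| := abs_pos.2 (sub_ne_zero.2 hkne)
      have hbd : ∀ x ∈ Set.Icc (xm - δ₀) xm, ‖Φ k x‖ ≤ Real.sqrt (2 * |k - h|) / κ := by
        intro x hx
        have hκx : κ ≤ 1 - x ^ 2 := hκle x ⟨hx.1, by linarith [hx.2]⟩
        have h1x : 0 < 1 - x ^ 2 := lt_of_lt_of_le hκ hκx
        have hP0 : P x ≤ 0 := hPleft_le x hx
        have h1x' : 1 - x ^ 2 ≤ 1 := by linarith [sq_nonneg x]
        have harg : 2 * (k - x) * (1 - x ^ 2) - ℓ ^ 2 ≤ 2 * |k - h| := by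
          rw [hshift]
          linarith [mul_nonneg (by linarith [le_abs_self (k - h)] :
              (0:ℝ) ≤ |k - h| - (k - h)) h1x.le,
            mul_nonneg (abs_nonneg (k - h)) (by linarith : (0:ℝ) ≤ 1 - (1 - x ^ 2))]
        rw [hΦapp, Real.norm_eq_abs, abs_of_nonneg (div_nonneg (Real.sqrt_nonneg _) h1x.le)]
        apply div_le_div₀ (Real.sqrt_nonneg _) _ hκ hκx
        exact Real.sqrt_le_sqrt (max_le harg (by positivity))
      have hvan : ∀ x ∈ Set.Icc (xm - δ₀) xm, 4 * |k - h| / m ≤ xm - x → Φ k x = 0 := by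
        intro x hx hxw
        have hPlin := hPleft_lin x hx
        have h1x' : 1 - x ^ 2 ≤ 1 := by linarith [sq_nonneg x]
        have h1xnn : 0 ≤ 1 - x ^ 2 := by nlinarith [mul_nonneg (by linarith [hx.2] : (0:ℝ) ≤ 1 - x) (by linarith [hx.1] : (0:ℝ) ≤ 1 + x)]
        have harg : 2 * (k - x) * (1 - x ^ 2) - ℓ ^ 2 ≤ 0 := by
          rw [hshift]
          have h2 : 2 * (k - h) * (1 - x ^ 2) ≤ 2 * |k - h| := by
            linarith [mul_nonneg (by linarith [le_abs_self (k - h)] :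
                (0:ℝ) ≤ |k - h| - (k - h)) h1xnn,
              mul_nonneg (abs_nonneg (k - h)) (by linarith : (0:ℝ) ≤ 1 - (1 - x ^ 2))]
          have h4 := mul_le_mul_of_nonneg_left hxw (by positivity : (0:ℝ) ≤ m / 2)
          have hcancel : m / 2 * (4 * |k - h| / m) = 2 * |k - h| := by
            field_simp
            ring
          linarith [h4, hcancel]
        rw [hΦapp, max_eq_right harg, Real.sqrt_zero, zero_div]
      have hΦh0 : (∫ x in (xm - δ₀)..xm, Φ h x) = 0 := by
        have hEq : Set.EqOn (Φ h) 0 (Set.uIcc (xm - δ₀) xm) := by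
          intro x hx
          rw [Set.uIcc_of_le (by linarith : xm - δ₀ ≤ xm)] at hx
          exact hΦO1 x hx
        exact (intervalIntegral.integral_congr hEq).trans (by simp)
      have heq : (∫ x in (xm - δ₀)..xm, q k x)
          = (k - h)⁻¹ * ∫ x in (xm - δ₀)..xm, Φ k x := by
        simp only [hqapp]
        rw [intervalIntegral.integral_const_mul,
          intervalIntegral.integral_sub (hΦint k hkd _ _ elo exm) (hΦint h hhk0 _ _ elo exm),
          hΦh0, sub_zero]
      have hw : (0:ℝ) ≤ 4 * |k - h| / m := by positivity
      have hIest : ‖∫ x in (xm - δ₀)..xm, Φ k x‖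
          ≤ Real.sqrt (2 * |k - h|) / κ * (4 * |k - h| / m) := by
        rcases le_total (xm - 4 * |k - h| / m) (xm - δ₀) with hca | hca
        · have hb := intervalIntegral.norm_integral_le_of_norm_le_const
            (C := Real.sqrt (2 * |k - h|) / κ) (f := Φ k) (a := xm - δ₀) (b := xm)
            (fun x hx => by
              rw [Set.uIoc_of_le (by linarith : xm - δ₀ ≤ xm)] at hx
              exact hbd x ⟨hx.1.le, hx.2⟩)
          refine le_trans hb ?_
          rw [show xm - (xm - δ₀) = δ₀ by ring, abs_of_pos hδ₀]
          exact mul_le_mul_of_nonneg_left (by linarith) (by positivity)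
        · have hmemw : xm - 4 * |k - h| / m ∈ Set.Icc (-1:ℝ) 1 :=
            ⟨by linarith [hca, hlo], by linarith [hw, exm.2]⟩
          rw [← intervalIntegral.integral_add_adjacent_intervals
            (hΦint k hkd _ _ elo hmemw) (hΦint k hkd _ _ hmemw exm)]
          have hzero : (∫ x in (xm - δ₀)..(xm - 4 * |k - h| / m), Φ k x) = 0 := by
            have hEq : Set.EqOn (Φ k) 0 (Set.uIcc (xm - δ₀) (xm - 4 * |k - h| / m)) := by
              intro x hx
              rw [Set.uIcc_of_le (by linarith : xm - δ₀ ≤ xm - 4 * |k - h| / m)] at hx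
              exact hvan x ⟨hx.1, by linarith [hx.2, hw]⟩ (by linarith [hx.2])
            exact (intervalIntegral.integral_congr hEq).trans (by simp)
          rw [hzero, zero_add]
          have hb := intervalIntegral.norm_integral_le_of_norm_le_const
            (C := Real.sqrt (2 * |k - h|) / κ) (f := Φ k) (a := xm - 4 * |k - h| / m)
            (b := xm)
            (fun x hx => by
              rw [Set.uIoc_of_le (by linarith [hw] : xm - 4 * |k - h| / m ≤ xm)] at hx
              exact hbd x ⟨by linarith [hx.1, hca], hx.2⟩)
          refine le_trans hb (le_of_eq ?_)
          rw [show xm - (xm - 4 * |k - h| / m) = 4 * |k - h| / m by ring, abs_of_nonneg hw]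
      rw [heq, norm_mul, norm_inv, Real.norm_eq_abs]
      calc |k - h|⁻¹ * ‖∫ x in (xm - δ₀)..xm, Φ k x‖
          ≤ |k - h|⁻¹ * (Real.sqrt (2 * |k - h|) / κ * (4 * |k - h| / m)) :=
            mul_le_mul_of_nonneg_left hIest (by positivity)
        _ = 4 / (m * κ) * Real.sqrt (2 * |k - h|) := by field_simp
    · have hcont : Continuous fun k : ℝ => 4 / (m * κ) * Real.sqrt (2 * |k - h|) := by
        fun_prop
      refine Filter.Tendsto.mono_left ?_ (nhdsWithin_le_nhds (s := {h}ᶜ))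
      simpa using hcont.tendsto h
  -- assemble
  have Hsum := ((((T1.add T2).add T3).add T4).add T5)
  simp only [zero_add, add_zero] at Hsum
  exact Filter.Tendsto.congr' (by filter_upwards [hsplit] with k hk; exact hk.symm) Hsum
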